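/- If p(x,τ) solves the constant-coefficient telegraph equation ∂²p/∂τ² + 2λ₀·∂p/∂τ = c₀²·∂²p/∂x² and t ↦ τ(t) = ∫₀ᵗ w(s)ds with w continuous and positive, then q(x,t) := p(x, τ(t)) solves the time-varying telegraph equation (1/(c₀w(t)))·∂/∂t[(1/(c₀w(t)))·∂q/∂t] + (2λ₀w(t)/(c₀w(t))²)·∂q/∂t = ∂²q/∂x². -/

import Mathlib

open Real MeasureTheory

/-- if `p` is a C² solution of the constant-coefficient
telegraph equation `∂²p/∂τ² + 2λ₀ ∂p/∂τ = c₀² ∂²p/∂x²` and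
`τ(t) = ∫₀ᵗ w` with `w` continuous positive, then `q(x,t) := p(x, τ(t))`
solves the time-varying telegraph equation with speed `c₀w(t)` and rate
`λ₀w(t)`. -/
theorem stmt18 (lam c₀ : ℝ) (hlam : 0 < lam) (hc₀ : 0 < c₀)
    (w : ℝ → ℝ) (hw : Continuous w) (hwpos : ∀ t, 0 < w t)
    (p : ℝ → ℝ → ℝ) (hp : ContDiff ℝ 2 (Function.uncurry p))
    (heq : ∀ x τ, deriv (deriv (fun σ => p x σ)) τ + 2 * lam * deriv (fun σ => p x σ) τ
      = c₀ ^ 2 * deriv (deriv (fun y => p y τ)) x)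
    (q : ℝ → ℝ → ℝ) (hq : ∀ x t, q x t = p x (∫ s in (0:ℝ)..t, w s)) :
    ∀ x t,
      (1 / (c₀ * w t)) * deriv (fun s => (1 / (c₀ * w s)) * deriv (fun u => q x u) s) t
        + (2 * (lam * w t) / (c₀ * w t) ^ 2) * deriv (fun s => q x s) t
      = deriv (deriv (fun y => q y t)) x := by
  intro x t
  set T : ℝ → ℝ := fun t => ∫ s in (0:ℝ)..t, w s with hTdef
  have hTd : ∀ s : ℝ, HasDerivAt T (w s) s := fun s =>
    intervalIntegral.integral_hasDerivAt_right (hw.intervalIntegrable _ _)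
      (hw.stronglyMeasurableAtFilter _ _) hw.continuousAt
  have hg : ∀ x : ℝ, ContDiff ℝ 2 (fun σ => p x σ) :=
    fun x => hp.comp (contDiff_const.prodMk contDiff_id)
  have hg1 : ∀ x : ℝ, Differentiable ℝ (fun σ => p x σ) :=
    fun x => (hg x).differentiable (by norm_num)
  have hg2 : ∀ x : ℝ, Differentiable ℝ (deriv (fun σ => p x σ)) := by
    intro x
    have h2 : ContDiff ℝ ((1:ℕ) + 1) (fun σ => p x σ) := by exact_mod_cast hg x
    exact ((contDiff_succ_iff_deriv.mp h2).2.2.differentiable (by norm_num))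
  have hqfun : (fun u => q x u) = fun u => p x (T u) := funext fun u => hq x u
  have hqd : ∀ s : ℝ, HasDerivAt (fun u => q x u)
      (deriv (fun σ => p x σ) (T s) * w s) s := by
    intro s
    rw [hqfun]
    exact ((hg1 x (T s)).hasDerivAt).comp s (hTd s)
  have hinner : (fun s => (1 / (c₀ * w s)) * deriv (fun u => q x u) s)
      = fun s => (1 / c₀) * deriv (fun σ => p x σ) (T s) := by
    funext s
    rw [(hqd s).deriv]
    have hws := (hwpos s).ne'
    field_simp
  have houter : HasDerivAt (fun s => (1 / c₀) * deriv (fun σ => p x σ) (T s))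
      ((1 / c₀) * (deriv (deriv (fun σ => p x σ)) (T t) * w t)) t :=
    ((((hg2 x) (T t)).hasDerivAt.comp t (hTd t)).const_mul (1 / c₀))
  have hRfun : (fun y => q y t) = fun y => p y (T t) := funext fun y => hq y t
  rw [hinner, houter.deriv, (hqd t).deriv, hRfun]
  have key := heq x (T t)
  have key' : deriv (deriv (fun y => p y (T t))) x
      = (deriv (deriv (fun σ => p x σ)) (T t)
        + 2 * lam * deriv (fun σ => p x σ) (T t)) / c₀ ^ 2 := by
    field_simp
    linarith
  rw [key']
  have hwt := (hwpos t).ne'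
  have hc := hc₀.ne'
  field_simp
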